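/- The functional Regular Extension Axiom holds in V: for every set x there exists a set C such that x ⊆ C, C is transitive, and for every b ∈ C and every set-theoretic function f from b into C (a functional set of pairs with domain b and values in C), the image of f is an element of C. -/

import Mathlib

universe u

open Cardinal Ordinal

namespace FREAProof

noncomputable instance (o : Ordinal.{u}) : IsWellOrder o.ToType (· < ·) := isWellOrder_lt


/-- Transitive closure of a ZFC set. -/
noncomputable def tcl (x : ZFSet.{u}) : ZFSet.{u} :=
  ZFSet.sUnion (ZFSet.range (fun n : ℕ => (ZFSet.sUnion)^[n] x))

theorem mem_tcl {x z : ZFSet.{u}} :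
    z ∈ tcl x ↔ ∃ n : ℕ, z ∈ (ZFSet.sUnion)^[n] x := by
  simp only [tcl, ZFSet.mem_sUnion, ZFSet.mem_range]
  constructor
  · rintro ⟨t, ⟨n, rfl⟩, hz⟩; exact ⟨n, hz⟩
  · rintro ⟨n, hz⟩; exact ⟨_, ⟨n, rfl⟩, hz⟩

theorem subset_tcl {x : ZFSet.{u}} : x ⊆ tcl x :=
  fun _ hz => mem_tcl.2 ⟨0, hz⟩

theorem tcl_transitive {x y : ZFSet.{u}} (hy : y ∈ tcl x) : y ⊆ tcl x := by
  intro z hz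
  obtain ⟨n, hn⟩ := mem_tcl.1 hy
  refine mem_tcl.2 ⟨n + 1, ?_⟩
  rw [Function.iterate_succ_apply']
  exact ZFSet.mem_sUnion.2 ⟨y, hn, hz⟩

/-- One-step closure: all images of set functions from elements of `A` into `A`. -/
noncomputable def step (A : ZFSet.{u}) : ZFSet.{u} :=
  ZFSet.sep
    (fun s => ∃ b ∈ A, ∃ f : ZFSet.{u}, ZFSet.IsFunc b A f ∧
      ∀ z, z ∈ s ↔ ∃ y ∈ b, ZFSet.pair y z ∈ f)
    (ZFSet.powerset A)

theorem mem_step {A s : ZFSet.{u}} :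
    s ∈ step A ↔ s ⊆ A ∧ ∃ b ∈ A, ∃ f : ZFSet.{u}, ZFSet.IsFunc b A f ∧
      ∀ z, z ∈ s ↔ ∃ y ∈ b, ZFSet.pair y z ∈ f := by
  rw [step, ZFSet.mem_sep, ZFSet.mem_powerset]

/-- Cumulative hierarchy of stages indexed by `o.ToType`. -/
noncomputable def stage (x : ZFSet.{u}) (o : Ordinal.{u}) : o.ToType → ZFSet.{u} :=
  fun w => tcl x ∪
    ZFSet.sUnion (ZFSet.range (fun v : {v : o.ToType // v < w} => stage x o v ∪ step (stage x o v)))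
termination_by w => w
decreasing_by exact v.2

theorem mem_stage {x : ZFSet.{u}} {o : Ordinal.{u}} {w : o.ToType} {z : ZFSet.{u}} :
    z ∈ stage x o w ↔ z ∈ tcl x ∨
      ∃ v : o.ToType, v < w ∧ (z ∈ stage x o v ∨ z ∈ step (stage x o v)) := by
  rw [stage]
  simp only [ZFSet.mem_union, ZFSet.mem_sUnion, ZFSet.mem_range]
  apply or_congr Iff.rfl
  constructor
  · rintro ⟨t, ⟨⟨v, hv⟩, rfl⟩, hz⟩
    exact ⟨v, hv, ZFSet.mem_union.1 hz⟩
  · rintro ⟨v, hv, hz⟩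
    exact ⟨_, ⟨⟨v, hv⟩, rfl⟩, ZFSet.mem_union.2 hz⟩

theorem tcl_subset_stage {x : ZFSet.{u}} {o : Ordinal.{u}} {w : o.ToType} :
    tcl x ⊆ stage x o w :=
  fun _ hz => mem_stage.2 (Or.inl hz)

theorem stage_mono {x : ZFSet.{u}} {o : Ordinal.{u}} {v w : o.ToType} (h : v < w) :
    stage x o v ⊆ stage x o w :=
  fun _ hz => mem_stage.2 (Or.inr ⟨v, h, Or.inl hz⟩)

theorem step_stage_subset {x : ZFSet.{u}} {o : Ordinal.{u}} {v w : o.ToType} (h : v < w) :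
    step (stage x o v) ⊆ stage x o w :=
  fun _ hz => mem_stage.2 (Or.inr ⟨v, h, Or.inr hz⟩)

instance (A : ZFSet.{u}) : Small.{u} A.toSet := ZFSet.small_coe A

/-- Small cardinality of a ZFC set. -/
noncomputable def cardZ (A : ZFSet.{u}) : Cardinal.{u} :=
  #(Shrink.{u} A.toSet)

theorem cardZ_le_of_injective {A B : ZFSet.{u}} (g : A.toSet → B.toSet)
    (hg : Function.Injective g) : cardZ A ≤ cardZ B :=
  Cardinal.mk_le_of_injective
    (f := (equivShrink B.toSet) ∘ g ∘ (equivShrink A.toSet).symm)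
    (((equivShrink B.toSet).injective.comp hg).comp (equivShrink A.toSet).symm.injective)

theorem cardZ_le_of_subset {A B : ZFSet.{u}} (h : A ⊆ B) : cardZ A ≤ cardZ B := by
  have hsub : A.toSet ⊆ B.toSet := fun z hz => h hz
  exact cardZ_le_of_injective (Set.inclusion hsub) (Set.inclusion_injective hsub)

theorem cardZ_le_of_surjective {A B : ZFSet.{u}} (g : B.toSet → A.toSet)
    (hg : Function.Surjective g) : cardZ A ≤ cardZ B :=
  Cardinal.mk_le_of_surjective
    (f := (equivShrink A.toSet) ∘ g ∘ (equivShrink B.toSet).symm)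
    (((equivShrink A.toSet).surjective.comp hg).comp (equivShrink B.toSet).symm.surjective)

/-- The image of a set function from `b` has cardinality at most that of `b`. -/
theorem card_im_le {b A f im : ZFSet.{u}} (hf : ZFSet.IsFunc b A f)
    (him : ∀ z, z ∈ im ↔ ∃ y ∈ b, ZFSet.pair y z ∈ f) : cardZ im ≤ cardZ b := by
  have hex : ∀ y : b.toSet, ∃ w, ZFSet.pair y.1 w ∈ f ∧ ∀ w', ZFSet.pair y.1 w' ∈ f → w' = w := by
    intro y
    obtain ⟨w, hw, hu⟩ := hf.2 y.1 y.2
    exact ⟨w, hw, hu⟩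
  choose ev hev huniq using hex
  have hmem : ∀ y : b.toSet, ev y ∈ im.toSet :=
    fun y => (him (ev y)).2 ⟨y.1, y.2, hev y⟩
  refine cardZ_le_of_surjective (fun y => ⟨ev y, hmem y⟩) ?_
  rintro ⟨z, hz⟩
  obtain ⟨y, hy, hp⟩ := (him z).1 hz
  exact ⟨⟨y, hy⟩, Subtype.ext ((huniq ⟨y, hy⟩ z hp).symm)⟩

theorem stage_card {x : ZFSet.{u}} {o : Ordinal.{u}} :
    ∀ w : o.ToType, ∀ A ∈ stage x o w, cardZ A ≤ cardZ (tcl x) := by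
  intro w
  induction w using WellFoundedLT.induction with
  | _ w IH =>
    intro A hA
    rcases mem_stage.1 hA with h | ⟨v, hv, h | h⟩
    · exact cardZ_le_of_subset (tcl_transitive h)
    · exact IH v hv A h
    · obtain ⟨-, b, hb, f, hf, him⟩ := mem_step.1 h
      exact (card_im_le hf him).trans (IH v hv b hb)

end FREAProof

open FREAProof Cardinal Ordinal in
theorem fREA (x : ZFSet) :
    ∃ C : ZFSet, x ⊆ C ∧ (∀ y ∈ C, y ⊆ C) ∧
      ∀ b ∈ C, ∀ f : ZFSet, ZFSet.IsFunc b C f →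
        ∃ im ∈ C, ∀ z : ZFSet, z ∈ im ↔ ∃ y ∈ b, ZFSet.pair y z ∈ f := by
  classical
  set lam := cardZ (tcl x) + ℵ₀ with hlamdef
  have hlam : ℵ₀ ≤ lam := le_add_self
  set κ := Order.succ lam with hκdef
  have hreg : κ.IsRegular := Cardinal.isRegular_succ hlam
  have hlim : Order.IsSuccLimit κ.ord := Cardinal.isSuccLimit_ord hreg.aleph0_le
  have hne : Nonempty κ.ord.ToType :=
    Ordinal.nonempty_toType_iff.2 hreg.ord_pos.ne'
  set C : ZFSet := ZFSet.sUnion (ZFSet.range (stage x κ.ord)) with hCdef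
  have memC : ∀ z : ZFSet, z ∈ C ↔ ∃ w, z ∈ stage x κ.ord w := by
    intro z
    simp only [hCdef, ZFSet.mem_sUnion, ZFSet.mem_range]
    constructor
    · rintro ⟨t, ⟨w, rfl⟩, hz⟩; exact ⟨w, hz⟩
    · rintro ⟨w, hz⟩; exact ⟨_, ⟨w, rfl⟩, hz⟩
  have htrans : ∀ w : κ.ord.ToType, ∀ y ∈ stage x κ.ord w, y ⊆ C := by
    intro w
    induction w using WellFoundedLT.induction with
    | _ w IH =>
      intro y hy z hz
      rcases mem_stage.1 hy with h | ⟨v, hv, h | h⟩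
      · exact (memC z).2 ⟨w, tcl_subset_stage (tcl_transitive h hz)⟩
      · exact IH v hv y h hz
      · exact (memC z).2 ⟨v, (mem_step.1 h).1 hz⟩
  refine ⟨C, ?_, ?_, ?_⟩
  · obtain ⟨w⟩ := hne
    exact fun z hz => (memC z).2 ⟨w, tcl_subset_stage (subset_tcl hz)⟩
  · intro y hy
    obtain ⟨w, hw⟩ := (memC y).1 hy
    exact htrans w y hw
  · intro b hb f hf
    set im := ZFSet.sep (fun z => ∃ y ∈ b, ZFSet.pair y z ∈ f) (ZFSet.sUnion (ZFSet.sUnion f)) with himdef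
    have him : ∀ z : ZFSet, z ∈ im ↔ ∃ y ∈ b, ZFSet.pair y z ∈ f := by
      intro z
      rw [himdef, ZFSet.mem_sep]
      constructor
      · exact fun h => h.2
      · intro h
        refine ⟨?_, h⟩
        obtain ⟨y, hy, hp⟩ := h
        have h1 : ({y, z} : ZFSet) ∈ ZFSet.pair y z := by
          simp [ZFSet.pair]
        have h2 : z ∈ ({y, z} : ZFSet) := by simp
        exact ZFSet.mem_sUnion.2 ⟨{y, z}, ZFSet.mem_sUnion.2 ⟨_, hp, h1⟩, h2⟩
    have hzC : ∀ z ∈ im, z ∈ C := by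
      intro z hz
      obtain ⟨y, hy, hp⟩ := (him z).1 hz
      exact (ZFSet.pair_mem_prod.1 (hf.1 hp)).2
    have hstages : ∀ z : im.toSet, ∃ w, z.1 ∈ stage x κ.ord w :=
      fun z => (memC z.1).1 (hzC z.1 z.2)
    choose σ hσ using hstages
    obtain ⟨wb, hwb⟩ := (memC b).1 hb
    set e := equivShrink im.toSet with hedef
    set F := fun i => Ordinal.typein (α := κ.ord.ToType) (· < ·) (σ (e.symm i)) with hFdef
    have hF : ∀ i, F i < κ.ord := fun i => Ordinal.typein_lt_self (σ (e.symm i))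
    have hcard : #(Shrink im.toSet) < κ.ord.cof := by
      rw [hreg.cof_eq]
      calc #(Shrink im.toSet) = cardZ im := rfl
        _ ≤ cardZ b := card_im_le hf him
        _ ≤ cardZ (tcl x) := stage_card wb b hwb
        _ ≤ lam := le_self_add
        _ < κ := Order.lt_succ lam
    have hsup : iSup F < κ.ord := Ordinal.iSup_lt_ord hcard hF
    set γ := max (iSup F) (Ordinal.typein (α := κ.ord.ToType) (· < ·) wb) with hγdef
    have hγ : γ < κ.ord := max_lt hsup (Ordinal.typein_lt_self wb)
    have hγ1 : Order.succ γ < κ.ord := hlim.succ_lt hγ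
    set w1 : κ.ord.ToType := (Ordinal.ToType.mk (o := κ.ord)) ⟨Order.succ γ, hγ1⟩ with hw1def
    have hw1 : Ordinal.typein (α := κ.ord.ToType) (· < ·) w1 = Order.succ γ := by
      rw [hw1def, Ordinal.ToType.mk_apply]
      exact Ordinal.typein_enum _ _
    have hlt : ∀ a : κ.ord.ToType,
        Ordinal.typein (α := κ.ord.ToType) (· < ·) a ≤ γ → a < w1 := by
      intro a ha
      rw [← Ordinal.typein_lt_typein (α := κ.ord.ToType) (· < ·), hw1]
      exact ha.trans_lt (Order.lt_succ γ)
    have hbw1 : b ∈ stage x κ.ord w1 :=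
      stage_mono (hlt wb (le_max_right _ _)) hwb
    have himsub : im ⊆ stage x κ.ord w1 := by
      intro z hz
      have h1 : F (e ⟨z, hz⟩) ≤ iSup F :=
        le_ciSup (Ordinal.bddAbove_range F) (e ⟨z, hz⟩)
      have h2 : Ordinal.typein (α := κ.ord.ToType) (· < ·) (σ ⟨z, hz⟩) ≤ γ := by
        have : F (e ⟨z, hz⟩) =
            Ordinal.typein (α := κ.ord.ToType) (· < ·) (σ ⟨z, hz⟩) := by
          rw [hFdef]; simp
        rw [← this]
        exact h1.trans (le_max_left _ _)
      exact stage_mono (hlt _ h2) (hσ ⟨z, hz⟩)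
    have hfunc : ZFSet.IsFunc b (stage x κ.ord w1) f := by
      refine ⟨?_, hf.2⟩
      intro p hp
      obtain ⟨a, ha, c, _, rfl⟩ := ZFSet.mem_prod.1 (hf.1 hp)
      exact ZFSet.pair_mem_prod.2 ⟨ha, himsub ((him c).2 ⟨a, ha, hp⟩)⟩
    have hstep : im ∈ step (stage x κ.ord w1) :=
      mem_step.2 ⟨himsub, b, hbw1, f, hfunc, him⟩
    have hγ2 : Order.succ (Order.succ γ) < κ.ord := hlim.succ_lt hγ1
    set w2 : κ.ord.ToType :=
      (Ordinal.ToType.mk (o := κ.ord)) ⟨Order.succ (Order.succ γ), hγ2⟩ with hw2def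
    have hw12 : w1 < w2 := by
      rw [hw1def, hw2def]
      exact ((Ordinal.ToType.mk (o := κ.ord))).lt_iff_lt.2 (Subtype.mk_lt_mk.2 (Order.lt_succ _))
    exact ⟨im, (memC im).2 ⟨w2, step_stage_subset hw12 hstep⟩, him⟩
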